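/- Let (X, ‖·‖) be a quasi-Banach space and U : X → X a mapping such that for some positive integer N, the iterate U^N is a (b,θ)-enriched contraction. Then U has a unique fixed point, i.e., Fix(U) = {p}, where p is the unique fixed point of U^N. -/

import Mathlib

/-- if some iterate U^N of U is a (b,θ)-enriched contraction on a
quasi-Banach space, then U has a unique fixed point p, which is also the unique
fixed point of U^N. -/
theorem stmt_9 {X : Type*} [AddCommGroup X] [Module ℝ X] (Nm : X → ℝ) (C : ℝ)
    (hC : 1 ≤ C)
    (hnn : ∀ x, 0 ≤ Nm x)
    (h0 : ∀ x, Nm x = 0 ↔ x = 0)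
    (h1 : ∀ (r : ℝ) (x : X), Nm (r • x) = |r| * Nm x)
    (h2 : ∀ x y, Nm (x + y) ≤ C * (Nm x + Nm y))
    (hcomplete : ∀ u : ℕ → X,
      (∀ ε > 0, ∃ N : ℕ, ∀ m ≥ N, ∀ n ≥ N, Nm (u m - u n) < ε) →
      ∃ l : X, Filter.Tendsto (fun n => Nm (u n - l)) Filter.atTop (nhds 0))
    (U : X → X) (N : ℕ) (hN : 0 < N)
    (b θ : ℝ) (hb : 0 ≤ b) (hθ0 : 0 ≤ θ) (hθ : θ < b + 1)
    (hU : ∀ x y, Nm (b • (x - y) + (U^[N] x - U^[N] y)) ≤ θ * Nm (x - y)) :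
    ∃ p : X, U^[N] p = p ∧ (∀ q, U^[N] q = q → q = p) ∧
      U p = p ∧ (∀ q, U q = q → q = p) := by
  have hC0 : (0:ℝ) < C := lt_of_lt_of_le one_pos hC
  have hb1 : (0:ℝ) < b + 1 := by linarith
  set k : ℝ := θ / (b + 1) with hk
  have hk0 : 0 ≤ k := div_nonneg hθ0 hb1.le
  have hk1 : k < 1 := (div_lt_one hb1).2 hθ
  have hNmneg : ∀ x y : X, Nm (x - y) = Nm (y - x) := by
    intro x y
    have e : (y - x) = (-1 : ℝ) • (x - y) := by simp
    rw [e, h1]; simp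
  set T : X → X := fun x => (b+1)⁻¹ • (b • x + U^[N] x) with hTdef
  have hTc : ∀ x y, Nm (T x - T y) ≤ k * Nm (x - y) := by
    intro x y
    have e : T x - T y = (b+1)⁻¹ • (b • (x - y) + (U^[N] x - U^[N] y)) := by
      simp only [hTdef, ← smul_sub]
      congr 1
      rw [smul_sub]; abel
    rw [e, h1, abs_of_pos (by positivity : (0:ℝ) < (b+1)⁻¹), hk, div_eq_mul_inv,
      mul_comm θ]
    calc (b+1)⁻¹ * Nm (b • (x - y) + (U^[N] x - U^[N] y))
        ≤ (b+1)⁻¹ * (θ * Nm (x - y)) :=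
          mul_le_mul_of_nonneg_left (hU x y) (by positivity)
      _ = (b+1)⁻¹ * θ * Nm (x - y) := by ring
  have hTm : ∀ m x y, Nm (T^[m] x - T^[m] y) ≤ k ^ m * Nm (x - y) := by
    intro m
    induction m with
    | zero => intro x y; simp
    | succ m ih =>
      intro x y
      rw [Function.iterate_succ_apply', Function.iterate_succ_apply']
      calc Nm (T (T^[m] x) - T (T^[m] y)) ≤ k * Nm (T^[m] x - T^[m] y) := hTc _ _
        _ ≤ k * (k ^ m * Nm (x - y)) := mul_le_mul_of_nonneg_left (ih x y) hk0
        _ = k ^ (m+1) * Nm (x - y) := by ring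
  obtain ⟨M, hM⟩ := exists_pow_lt_of_lt_one (show (0:ℝ) < C⁻¹ by positivity) hk1
  set q : ℝ := k ^ M with hqdef
  have hq0 : 0 ≤ q := pow_nonneg hk0 M
  have hr1 : C * q < 1 := by
    have := mul_lt_mul_of_pos_left hM hC0
    rwa [mul_inv_cancel₀ hC0.ne'] at this
  have hr0 : 0 ≤ C * q := by positivity
  have hq1 : q < 1 := lt_of_le_of_lt (le_mul_of_one_le_left hq0 hC) hr1
  set V : X → X := T^[M] with hVdef
  have hVc : ∀ x y, Nm (V x - V y) ≤ q * Nm (x - y) := hTm M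
  set u : ℕ → X := fun n => V^[n] 0 with hudef
  have hsucc : ∀ n, u (n+1) = V (u n) := fun n => Function.iterate_succ_apply' V n 0
  set d0 : ℝ := Nm (u 1 - u 0) with hd0def
  have hd0 : 0 ≤ d0 := hnn _
  have hd : ∀ i, Nm (u (i+1) - u i) ≤ q ^ i * d0 := by
    intro i
    induction i with
    | zero => simp; exact le_of_eq hd0def.symm
    | succ i ih =>
      have e2 : u (i+2) - u (i+1) = V (u (i+1)) - V (u i) := by
        rw [hsucc (i+1), hsucc i]
      rw [e2]
      calc Nm (V (u (i+1)) - V (u i)) ≤ q * Nm (u (i+1) - u i) := hVc _ _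
        _ ≤ q * (q ^ i * d0) := mul_le_mul_of_nonneg_left ih hq0
        _ = q ^ (i+1) * d0 := by ring
  have key : ∀ j n, Nm (u (n + j) - u n) ≤
      C * q ^ n * d0 * ∑ i ∈ Finset.range j, (C * q) ^ i := by
    intro j
    induction j with
    | zero => intro n; simpa using le_of_eq ((h0 0).2 rfl)
    | succ j ih =>
      intro n
      have h4 := h2 (u (n+(j+1)) - u (n+1)) (u (n+1) - u n)
      rw [sub_add_sub_cancel] at h4
      have h5 : Nm (u (n+(j+1)) - u (n+1)) ≤
          C * q ^ (n+1) * d0 * ∑ i ∈ Finset.range j, (C * q) ^ i := by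
        have := ih (n+1)
        rwa [show n + 1 + j = n + (j+1) by ring] at this
      have h6 := hd n
      have hS : ∑ i ∈ Finset.range (j+1), (C*q) ^ i
          = (C*q) * ∑ i ∈ Finset.range j, (C*q) ^ i + 1 := geom_sum_succ
      have hSnn : 0 ≤ ∑ i ∈ Finset.range j, (C * q) ^ i :=
        Finset.sum_nonneg fun i _ => pow_nonneg hr0 i
      have hqn : (0:ℝ) ≤ q ^ n := pow_nonneg hq0 n
      calc Nm (u (n+(j+1)) - u n)
          ≤ C * (Nm (u (n+(j+1)) - u (n+1)) + Nm (u (n+1) - u n)) := h4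
        _ ≤ C * ((C * q ^ (n+1) * d0 * ∑ i ∈ Finset.range j, (C * q) ^ i) + q ^ n * d0) := by
            apply mul_le_mul_of_nonneg_left _ hC0.le
            linarith
        _ = C * q ^ n * d0 * ∑ i ∈ Finset.range (j+1), (C * q) ^ i := by
            rw [hS]; ring
  have h1r : (0:ℝ) < 1 - C * q := by linarith
  have Sle : ∀ j : ℕ, (∑ i ∈ Finset.range j, (C * q) ^ i) ≤ (1 - C * q)⁻¹ := by
    intro j
    have e : (∑ i ∈ Finset.range j, (C * q) ^ i) * (C * q - 1) = (C * q) ^ j - 1 :=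
      geom_sum_mul (C * q) j
    have hinv : (1 - C * q) * (1 - C * q)⁻¹ = 1 := mul_inv_cancel₀ h1r.ne'
    have hinvnn : 0 ≤ (1 - C * q)⁻¹ := by positivity
    nlinarith [pow_nonneg hr0 j]
  have Bnd : ∀ n m : ℕ, n ≤ m → Nm (u m - u n) ≤ C * d0 * (1 - C * q)⁻¹ * q ^ n := by
    intro n m hnm
    have := key (m - n) n
    rw [Nat.add_sub_cancel' hnm] at this
    have hqn : (0:ℝ) ≤ q ^ n := pow_nonneg hq0 n
    calc Nm (u m - u n) ≤ C * q ^ n * d0 * ∑ i ∈ Finset.range (m-n), (C * q) ^ i := this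
      _ ≤ C * q ^ n * d0 * (1 - C * q)⁻¹ :=
          mul_le_mul_of_nonneg_left (Sle _) (by positivity)
      _ = C * d0 * (1 - C * q)⁻¹ * q ^ n := by ring
  have ht : Filter.Tendsto (fun n => C * d0 * (1 - C * q)⁻¹ * q ^ n)
      Filter.atTop (nhds 0) := by
    have := (tendsto_pow_atTop_nhds_zero_of_lt_one hq0 hq1).const_mul
      (C * d0 * (1 - C * q)⁻¹)
    simpa using this
  have hcau : ∀ ε > 0, ∃ N0 : ℕ, ∀ m ≥ N0, ∀ n ≥ N0, Nm (u m - u n) < ε := by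
    intro ε hε
    obtain ⟨N0, hN0⟩ := Filter.eventually_atTop.1 (ht.eventually (gt_mem_nhds hε))
    refine ⟨N0, fun m hm n hn => ?_⟩
    rcases le_total n m with h | h
    · exact lt_of_le_of_lt (Bnd n m h) (hN0 n hn)
    · rw [hNmneg]; exact lt_of_le_of_lt (Bnd m n h) (hN0 m hm)
  obtain ⟨l, hl⟩ := hcomplete u hcau
  have hVl : V l = l := by
    have hb' : ∀ n, Nm (V l - l) ≤ C * (q * Nm (u n - l) + Nm (u (n+1) - l)) := by
      intro n
      have h4 := h2 (V l - V (u n)) (V (u n) - l)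
      rw [sub_add_sub_cancel] at h4
      have h5 : Nm (V l - V (u n)) ≤ q * Nm (l - u n) := hVc l (u n)
      rw [hNmneg l (u n)] at h5
      rw [hsucc n]
      calc Nm (V l - l) ≤ C * (Nm (V l - V (u n)) + Nm (V (u n) - l)) := h4
        _ ≤ C * (q * Nm (u n - l) + Nm (V (u n) - l)) := by
            apply mul_le_mul_of_nonneg_left _ hC0.le
            linarith
    have h7 : Filter.Tendsto (fun n => Nm (u (n+1) - l)) Filter.atTop (nhds 0) :=
      hl.comp (Filter.tendsto_add_atTop_nat 1)
    have htend : Filter.Tendsto (fun n => C * (q * Nm (u n - l) + Nm (u (n+1) - l)))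
        Filter.atTop (nhds 0) := by
      have := ((hl.const_mul q).add h7).const_mul C
      simpa using this
    have h8 : Nm (V l - l) ≤ 0 := ge_of_tendsto' htend hb'
    exact sub_eq_zero.mp ((h0 _).1 (le_antisymm h8 (hnn _)))
  have hVuniq : ∀ x y, V x = x → V y = y → x = y := by
    intro x y hx hy
    have h9 := hVc x y
    rw [hx, hy] at h9
    have hle : Nm (x - y) ≤ 0 := by nlinarith [hnn (x - y)]
    exact sub_eq_zero.mp ((h0 _).1 (le_antisymm hle (hnn _)))
  have hTl : T l = l := by
    apply hVuniq _ _ _ hVl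
    show T^[M] (T l) = T l
    rw [← Function.iterate_succ_apply, Function.iterate_succ_apply']
    show T (V l) = T l
    rw [hVl]
  have hUN : U^[N] l = l := by
    have h10 : (b+1) • T l = (b+1) • l := by rw [hTl]
    simp only [hTdef] at h10
    rw [smul_smul, mul_inv_cancel₀ hb1.ne', one_smul] at h10
    have e : (b+1) • l = b • l + l := by rw [add_smul, one_smul]
    rw [e] at h10
    exact add_left_cancel h10
  have hUNuniq : ∀ z, U^[N] z = z → z = l := by
    intro z hz
    have hTz : T z = z := by
      simp only [hTdef]
      rw [hz]
      have e : b • z + z = (b+1) • z := by rw [add_smul, one_smul]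
      rw [e, smul_smul, inv_mul_cancel₀ hb1.ne', one_smul]
    have h9 := hTc z l
    rw [hTz, hTl] at h9
    have hle : Nm (z - l) ≤ 0 := by nlinarith [hnn (z - l)]
    exact sub_eq_zero.mp ((h0 _).1 (le_antisymm hle (hnn _)))
  have hUl : U l = l := by
    apply hUNuniq
    rw [← Function.iterate_succ_apply, Function.iterate_succ_apply', hUN]
  exact ⟨l, hUN, fun z hz => hUNuniq z hz, hUl,
    fun z hz => hUNuniq z (Function.iterate_fixed hz N)⟩
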